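/- Let (X, A, φ_X) be an inverse limit pro-C*-correspondence. Then the following are equivalent: (1) π_μ^A(J_X^λ) ∩ π_μ^A(X^{-1}(ker p_μ)) = {0} for all λ, μ ∈ Λ with μ ≤ λ; (2) π_{λμ}^A(J_{X_λ}) ⊂ J_{X_μ} for all λ, μ ∈ Λ with μ ≤ λ. -/

import Mathlib

/-!
Self-contained toolkit for formalizing the paper
"A construction of pro-C*-algebras from pro-C*-correspondences"
(M. Joiţa, I. Zarakas).

A pro-C*-algebra is encoded by an (upward directed) family of C*-seminorms
`p : Λ → Seminorm ℂ A` on a star `ℂ`-algebra, which is separating (Hausdorff)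
and complete (every filter that is Cauchy with respect to every seminorm
converges seminorm-wise).  All topological notions (closures, continuity of
maps, ...) are expressed directly through the seminorms.  The canonical
C*-algebra `A_λ = A / ker p_λ` is dealt with through the seminorm `p_λ`
itself or, where the quotient is genuinely needed, through abstract
"quotient presentation" data (`QuotPres`).  Universal objects (Katsura
algebras of C*-correspondences, the pro-C*-algebra `𝒪_X`, crossed products)
are encoded through their universal properties.
-/

noncomputable section

/-- A pro-C*-algebra structure on a star `ℂ`-algebra `A`: a family of
C*-seminorms indexed by a preordered set `Λ`, monotone in the index,
separating (Hausdorff) and (seminorm-wise) complete. -/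
structure ProCStar (Λ : Type) [Preorder Λ] (A : Type)
    [Ring A] [StarRing A] [Algebra ℂ A] where
  p : Λ → Seminorm ℂ A
  p_mul : ∀ (l : Λ) (a b : A), p l (a * b) ≤ p l a * p l b
  p_star : ∀ (l : Λ) (a : A), p l (star a) = p l a
  p_cstar : ∀ (l : Λ) (a : A), p l (star a * a) = p l a * p l a
  p_mono : ∀ {l m : Λ}, l ≤ m → ∀ a : A, p l a ≤ p m a
  separating : ∀ a : A, (∀ l, p l a = 0) → a = 0
  complete : ∀ F : Filter A, F.NeBot →
    (∀ (l : Λ) (ε : ℝ), 0 < ε → ∃ s ∈ F, ∀ x ∈ s, ∀ y ∈ s, p l (x - y) < ε) →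
    ∃ a : A, ∀ (l : Λ) (ε : ℝ), 0 < ε → ∃ s ∈ F, ∀ x ∈ s, p l (x - a) < ε

/-- Closure of a subset with respect to a family of seminorms. -/
def semiClosure {Λ E : Type} [AddCommGroup E] [Module ℂ E]
    (q : Λ → Seminorm ℂ E) (s : Set E) : Set E :=
  {x | ∀ (l : Λ) (ε : ℝ), 0 < ε → ∃ y ∈ s, q l (x - y) < ε}

/-- A closed two-sided star ideal of a pro-C*-algebra. -/
structure IsProClosedIdeal {Λ : Type} [Preorder Λ] {A : Type}
    [Ring A] [StarRing A] [Algebra ℂ A] (S : ProCStar Λ A) (I : Set A) : Prop where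
  zero_mem : (0 : A) ∈ I
  add_mem : ∀ {a b : A}, a ∈ I → b ∈ I → a + b ∈ I
  smul_mem : ∀ (c : ℂ) {a : A}, a ∈ I → c • a ∈ I
  mul_mem_left : ∀ (b : A) {a : A}, a ∈ I → b * a ∈ I
  mul_mem_right : ∀ (b : A) {a : A}, a ∈ I → a * b ∈ I
  star_mem : ∀ {a : A}, a ∈ I → star a ∈ I
  closed : semiClosure S.p I ⊆ I

/-- The kernel of the seminorm `p_λ`, i.e. the kernel of `π_λ^A : A → A_λ`. -/
def kerSeminorm {Λ : Type} [Preorder Λ] {A : Type} [Ring A] [StarRing A] [Algebra ℂ A]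
    (S : ProCStar Λ A) (l : Λ) : Set A :=
  {a : A | S.p l a = 0}

/-- A continuous star-algebra morphism between pro-C*-algebras
(continuity is expressed by domination of seminorms, which for star morphisms
between pro-C*-algebras is equivalent to topological continuity). -/
def IsProCStarHom {Λ₁ Λ₂ A₁ A₂ : Type} [Preorder Λ₁] [Preorder Λ₂]
    [Ring A₁] [StarRing A₁] [Algebra ℂ A₁] [Ring A₂] [StarRing A₂] [Algebra ℂ A₂]
    (S₁ : ProCStar Λ₁ A₁) (S₂ : ProCStar Λ₂ A₂) (f : A₁ → A₂) : Prop :=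
  (∀ a b, f (a + b) = f a + f b) ∧ (∀ (c : ℂ) (a : A₁), f (c • a) = c • f a) ∧
    (∀ a b, f (a * b) = f a * f b) ∧ (∀ a, f (star a) = star (f a)) ∧
    ∀ l₂ : Λ₂, ∃ l₁ : Λ₁, ∀ a, S₂.p l₂ (f a) ≤ S₁.p l₁ a

/-- An isomorphism of pro-C*-algebras. -/
def IsProCStarIso {Λ₁ Λ₂ A₁ A₂ : Type} [Preorder Λ₁] [Preorder Λ₂]
    [Ring A₁] [StarRing A₁] [Algebra ℂ A₁] [Ring A₂] [StarRing A₂] [Algebra ℂ A₂]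
    (S₁ : ProCStar Λ₁ A₁) (S₂ : ProCStar Λ₂ A₂) (f : A₁ → A₂) : Prop :=
  IsProCStarHom S₁ S₂ f ∧ ∃ g : A₂ → A₁, IsProCStarHom S₂ S₁ g ∧
    Function.LeftInverse g f ∧ Function.RightInverse g f

/-- A (right) Hilbert pro-C*-module over the pro-C*-algebra `(A, S)`:
a right `A`-module with an `A`-valued inner product, complete with respect
to the induced family of seminorms `q l x = (p l ⟨x,x⟩)^{1/2}`
(the seminorms are part of the data, linked to the inner product by `q_sq`). -/
structure HilbertMod {Λ : Type} [Preorder Λ] {A : Type} [Ring A] [StarRing A] [Algebra ℂ A]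
    (S : ProCStar Λ A) (X : Type) [AddCommGroup X] [Module ℂ X] where
  smul : X → A → X
  add_smul' : ∀ (x y : X) (a : A), smul (x + y) a = smul x a + smul y a
  smul_add' : ∀ (x : X) (a b : A), smul x (a + b) = smul x a + smul x b
  smul_mul' : ∀ (x : X) (a b : A), smul x (a * b) = smul (smul x a) b
  csmul_smul' : ∀ (c : ℂ) (x : X) (a : A), smul (c • x) a = c • smul x a
  smul_csmul' : ∀ (c : ℂ) (x : X) (a : A), smul x (c • a) = c • smul x a
  inner : X → X → A
  inner_add_right : ∀ x y z : X, inner x (y + z) = inner x y + inner x z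
  inner_smul_right : ∀ (x y : X) (a : A), inner x (smul y a) = inner x y * a
  inner_csmul_right : ∀ (c : ℂ) (x y : X), inner x (c • y) = c • inner x y
  inner_star : ∀ x y : X, star (inner x y) = inner y x
  inner_self_pos : ∀ x : X, ∃ b : A, inner x x = star b * b
  inner_self_eq_zero : ∀ x : X, inner x x = 0 → x = 0
  q : Λ → Seminorm ℂ X
  q_sq : ∀ (l : Λ) (x : X), q l x * q l x = S.p l (inner x x)
  complete : ∀ F : Filter X, F.NeBot →
    (∀ (l : Λ) (ε : ℝ), 0 < ε → ∃ s ∈ F, ∀ x ∈ s, ∀ y ∈ s, q l (x - y) < ε) →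
    ∃ x₀ : X, ∀ (l : Λ) (ε : ℝ), 0 < ε → ∃ s ∈ F, ∀ x ∈ s, q l (x - x₀) < ε

section Operators

variable {Λ : Type} [Preorder Λ] {A : Type} [Ring A] [StarRing A] [Algebra ℂ A]
  {S : ProCStar Λ A} {X : Type} [AddCommGroup X] [Module ℂ X]

/-- The operator seminorm `p_{λ, L_A(X)}(T) = sup { q_λ(Tx) : q_λ(x) ≤ 1 }`. -/
def opSemi (M : HilbertMod S X) (l : Λ) (T : X → X) : ℝ :=
  sSup ((fun x => M.q l (T x)) '' {x : X | M.q l x ≤ 1})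

/-- `Tst` is an adjoint of `T`. -/
def AdjointPairOn (M : HilbertMod S X) (T Tst : X → X) : Prop :=
  ∀ x y : X, M.inner (T x) y = M.inner x (Tst y)

/-- Membership in `L_A(X)`: an adjointable module morphism. -/
def IsAdjointableOn (M : HilbertMod S X) (T : X → X) : Prop :=
  (∀ x y : X, T (x + y) = T x + T y) ∧ (∀ (c : ℂ) (x : X), T (c • x) = c • T x) ∧
    (∀ (x : X) (a : A), T (M.smul x a) = M.smul (T x) a) ∧
    ∃ Tst : X → X, AdjointPairOn M T Tst

/-- The "rank one" operator `θ_{y,x}(z) = y⟨x,z⟩_A`. -/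
def thetaOp (M : HilbertMod S X) (y x : X) : X → X :=
  fun z => M.smul y (M.inner x z)

/-- `Θ(X)`, the linear span of the operators `θ_{y,x}`. -/
def thetaSpan (M : HilbertMod S X) : Submodule ℂ (X → X) :=
  Submodule.span ℂ {T : X → X | ∃ y x : X, T = thetaOp M y x}

/-- `π_λ^{L_A(X)}(T) ∈ K_{A_λ}(X_λ)`, expressed through the seminorm `p_{λ,L_A(X)}`:
`T` is approximable by elements of `Θ(X)` modulo the kernel of `p_{λ,L_A(X)}`. -/
def memKlevel (M : HilbertMod S X) (l : Λ) (T : X → X) : Prop :=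
  ∀ ε : ℝ, 0 < ε → ∃ k ∈ thetaSpan M, opSemi M l (T - k) < ε

/-- Membership in `K_A(X)`, the closure of `Θ(X)` in `L_A(X)`. -/
def memK (M : HilbertMod S X) (T : X → X) : Prop :=
  IsAdjointableOn M T ∧ ∀ l : Λ, memKlevel M l T

/-- `XI = span { x a : x ∈ X, a ∈ I }`. -/
def smulSet (M : HilbertMod S X) (I : Set A) : Submodule ℂ X :=
  Submodule.span ℂ {z : X | ∃ x : X, ∃ a ∈ I, z = M.smul x a}

end Operators

/-- A pro-C*-correspondence `(X, A, φ_X)`: a Hilbert pro-C*-module `X` over `A`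
together with a continuous star morphism `φ_X : A → L_A(X)`. -/
structure Corr {Λ : Type} [Preorder Λ] {A : Type} [Ring A] [StarRing A] [Algebra ℂ A]
    (S : ProCStar Λ A) {X : Type} [AddCommGroup X] [Module ℂ X] (M : HilbertMod S X) where
  phi : A → X → X
  phi_add : ∀ a b : A, phi (a + b) = phi a + phi b
  phi_csmul : ∀ (c : ℂ) (a : A), phi (c • a) = c • phi a
  phi_mul : ∀ (a b : A) (x : X), phi (a * b) x = phi a (phi b x)
  phi_adj : ∀ a : A, IsAdjointableOn M (phi a)
  phi_star : ∀ a : A, AdjointPairOn M (phi a) (phi (star a))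
  phi_cont : ∀ l : Λ, ∃ m : Λ, ∀ a : A, opSemi M l (phi a) ≤ S.p m a

section CorrDefs

variable {Λ : Type} [Preorder Λ] {A : Type} [Ring A] [StarRing A] [Algebra ℂ A]
  {S : ProCStar Λ A} {X : Type} [AddCommGroup X] [Module ℂ X] {M : HilbertMod S X}

/-- `X(I)`, the closed span of `{ ⟨y, φ_X(a) x⟩_A : a ∈ I, x, y ∈ X }`. -/
def XofIdeal (C : Corr S M) (I : Set A) : Set A :=
  semiClosure S.p
    ↑(Submodule.span ℂ {c : A | ∃ a ∈ I, ∃ x y : X, c = M.inner y (C.phi a x)})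

/-- `X⁻¹(I) = { a ∈ A : ⟨y, φ_X(a) x⟩_A ∈ I for all x, y ∈ X }`. -/
def XinvIdeal (C : Corr S M) (I : Set A) : Set A :=
  {a : A | ∀ x y : X, M.inner y (C.phi a x) ∈ I}

/-- The ideal `J_X^λ = { a : π_λ^{L_A(X)}(φ_X(a)) ∈ K_{A_λ}(X_λ) and
π_λ^A(ab) = 0 for every b ∈ ker (π_λ^{L_A(X)} ∘ φ_X) }`, all conditions being
expressed through the seminorms `p_λ` and `p_{λ,L_A(X)}`. -/
def Jlevel (C : Corr S M) (l : Λ) : Set A :=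
  {a : A | memKlevel M l (C.phi a) ∧
    ∀ b : A, opSemi M l (C.phi b) = 0 → S.p l (a * b) = 0}

/-- The ideal `𝒥_X = ⋂_λ J_X^λ`. -/
def JX (C : Corr S M) : Set A :=
  ⋂ l : Λ, Jlevel C l

/-- Katsura's ideal `J_X = φ_X⁻¹(K_A(X)) ∩ (ker φ_X)^⊥` of a C*-correspondence
(to be used when the index set is a singleton, i.e. for C*-algebras). -/
def KatsuraIdeal (C : Corr S M) : Set A :=
  {a : A | memK M (C.phi a) ∧ ∀ b : A, C.phi b = 0 → a * b = 0}

/-- `(X, A, φ_X)` is an inverse limit pro-C*-correspondence: `φ_X` is compatible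
with the Arens–Michael decompositions, i.e. `φ_X(ker p_λ) ⊆ ker π_λ^{L_A(X)}`
for every `λ`, so that `φ_X = lim_λ φ_{X_λ}`. -/
def IsInvLimCorr (C : Corr S M) : Prop :=
  ∀ (l : Λ) (a : A), S.p l a = 0 → opSemi M l (C.phi a) = 0

/-- An ideal `I` is positively invariant if `X(I) ⊆ I`. -/
def PosInvariant (C : Corr S M) (I : Set A) : Prop :=
  XofIdeal C I ⊆ I

/-- An ideal `I` is negatively invariant if
`π_μ^A(J_X^λ) ∩ π_μ^A(X⁻¹(I)) ⊆ π_μ^A(I)` for all `λ ≥ μ`: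
whenever `a ∈ J_X^λ` and `a' ∈ X⁻¹(I)` have the same image in `A_μ`, this
common image lies in `π_μ^A(I)`. -/
def NegInvariant (C : Corr S M) (I : Set A) : Prop :=
  ∀ (l m : Λ), m ≤ l → ∀ a ∈ Jlevel C l, ∀ a' ∈ XinvIdeal C I,
    S.p m (a - a') = 0 → ∃ i ∈ I, S.p m (a - i) = 0

/-- An invariant ideal: both positively and negatively invariant. -/
def InvariantIdeal (C : Corr S M) (I : Set A) : Prop :=
  PosInvariant C I ∧ NegInvariant C I

end CorrDefs

/-- A morphism `(Π, T)` between pro-C*-correspondences. -/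
structure CorrMor {Λ : Type} [Preorder Λ] {A : Type} [Ring A] [StarRing A] [Algebra ℂ A]
    {S : ProCStar Λ A} {X : Type} [AddCommGroup X] [Module ℂ X] {M : HilbertMod S X}
    (C : Corr S M)
    {Δ : Type} [Preorder Δ] {B : Type} [Ring B] [StarRing B] [Algebra ℂ B]
    {SB : ProCStar Δ B} {Y : Type} [AddCommGroup Y] [Module ℂ Y] {N : HilbertMod SB Y}
    (D : Corr SB N) where
  Pi : A → B
  Pi_add : ∀ a b : A, Pi (a + b) = Pi a + Pi b
  Pi_csmul : ∀ (c : ℂ) (a : A), Pi (c • a) = c • Pi a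
  Pi_mul : ∀ a b : A, Pi (a * b) = Pi a * Pi b
  Pi_star : ∀ a : A, Pi (star a) = star (Pi a)
  Pi_cont : ∀ d : Δ, ∃ l : Λ, ∀ a : A, SB.p d (Pi a) ≤ S.p l a
  T : X → Y
  T_inner : ∀ x₁ x₂ : X, N.inner (T x₁) (T x₂) = Pi (M.inner x₁ x₂)
  T_phi : ∀ (a : A) (x : X), D.phi (Pi a) (T x) = T (C.phi a x)

/-- A representation `(π, t)` of a pro-C*-correspondence `(X, A, φ_X)`
on a pro-C*-algebra `B`, i.e. a morphism into the identity correspondence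
`(B, B, id_B)`. -/
structure CorrRep {Λ : Type} [Preorder Λ] {A : Type} [Ring A] [StarRing A] [Algebra ℂ A]
    {S : ProCStar Λ A} {X : Type} [AddCommGroup X] [Module ℂ X] {M : HilbertMod S X}
    (C : Corr S M)
    {ΛB : Type} [Preorder ΛB] {B : Type} [Ring B] [StarRing B] [Algebra ℂ B]
    (SB : ProCStar ΛB B) where
  pi : A → B
  pi_add : ∀ a b : A, pi (a + b) = pi a + pi b
  pi_csmul : ∀ (c : ℂ) (a : A), pi (c • a) = c • pi a
  pi_mul : ∀ a b : A, pi (a * b) = pi a * pi b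
  pi_star : ∀ a : A, pi (star a) = star (pi a)
  pi_cont : ∀ d : ΛB, ∃ l : Λ, ∀ a : A, SB.p d (pi a) ≤ S.p l a
  t : X → B
  t_add : ∀ x y : X, t (x + y) = t x + t y
  t_csmul : ∀ (c : ℂ) (x : X), t (c • x) = c • t x
  t_inner : ∀ x y : X, star (t x) * t y = pi (M.inner x y)
  t_phi : ∀ (a : A) (x : X), t (C.phi a x) = pi a * t x

/-- Covariance of a representation `(π, t)`: `ψ_t(φ_X(a)) = π(a)` for every
`a ∈ 𝒥_X`, expressed through simultaneous approximation: there is a net of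
finite "rank one" sums `∑ θ_{y_i, x_i}` converging to `φ_X(a)` in `L_A(X)`
whose images `∑ t(y_i) t(x_i)*` converge to `π(a)` in `B`. -/
def IsCovariantRep {Λ : Type} [Preorder Λ] {A : Type} [Ring A] [StarRing A] [Algebra ℂ A]
    {S : ProCStar Λ A} {X : Type} [AddCommGroup X] [Module ℂ X] {M : HilbertMod S X}
    {C : Corr S M}
    {ΛB : Type} [Preorder ΛB] {B : Type} [Ring B] [StarRing B] [Algebra ℂ B]
    {SB : ProCStar ΛB B} (R : CorrRep C SB) : Prop :=
  ∀ a ∈ JX C, ∃ (ι : Type) (F : Filter ι), F.NeBot ∧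
    ∃ (n : ι → ℕ) (xs ys : (j : ι) → Fin (n j) → X),
      (∀ l : Λ, Filter.Tendsto
        (fun j => opSemi M l (C.phi a - ∑ i, thetaOp M (ys j i) (xs j i))) F (nhds 0)) ∧
      (∀ d : ΛB, Filter.Tendsto
        (fun j => SB.p d (R.pi a - ∑ i, R.t (ys j i) * star (R.t (xs j i)))) F (nhds 0))

/-- The pro-C*-algebra `𝒪_X` associated to a pro-C*-correspondence, presented
by a universal covariant representation `(π_X, t_X)` whose images generate it. -/
structure UniversalCovRep {Λ : Type} [Preorder Λ] {A : Type} [Ring A] [StarRing A] [Algebra ℂ A]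
    {S : ProCStar Λ A} {X : Type} [AddCommGroup X] [Module ℂ X] {M : HilbertMod S X}
    (C : Corr S M)
    {ΛO : Type} [Preorder ΛO] {O : Type} [Ring O] [StarRing O] [Algebra ℂ O] [StarModule ℂ O]
    (SO : ProCStar ΛO O) where
  rep : CorrRep C SO
  covariant : IsCovariantRep rep
  generates : ∀ o : O, o ∈ semiClosure SO.p
    ↑(NonUnitalStarAlgebra.adjoin ℂ (Set.range rep.pi ∪ Set.range rep.t))
  universal : ∀ {ΛB : Type} [Preorder ΛB] {B : Type} [Ring B] [StarRing B] [Algebra ℂ B]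
    (SB : ProCStar ΛB B) (R : CorrRep C SB), IsCovariantRep R →
    ∃! Φ : O → B, IsProCStarHom SO SB Φ ∧
      (∀ a, Φ (rep.pi a) = R.pi a) ∧ (∀ x, Φ (rep.t x) = R.t x)

/-- A presentation of the quotient C*-correspondence
`(X_λ, A_λ, φ_{X_λ})` of `(X, A, φ_X)` at level `λ`: a C*-algebra `(B, SB)`
(a pro-C*-algebra over a singleton index set) which is a quotient of `A` by
`ker p_λ`, a Hilbert C*-module `N` over it which is a quotient of `X` by
`ker p_λ^A`, and the induced correspondence `D`. -/
structure QuotPres {Λ : Type} [Preorder Λ] {A : Type} [Ring A] [StarRing A] [Algebra ℂ A]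
    {S : ProCStar Λ A} {X : Type} [AddCommGroup X] [Module ℂ X] {M : HilbertMod S X}
    (C : Corr S M) (l : Λ)
    {B : Type} [Ring B] [StarRing B] [Algebra ℂ B] (SB : ProCStar PUnit B)
    {Y : Type} [AddCommGroup Y] [Module ℂ Y] (N : HilbertMod SB Y) (D : Corr SB N)
    (piq : A → B) (sig : X → Y) : Prop where
  piq_add : ∀ a b : A, piq (a + b) = piq a + piq b
  piq_csmul : ∀ (c : ℂ) (a : A), piq (c • a) = c • piq a
  piq_mul : ∀ a b : A, piq (a * b) = piq a * piq b
  piq_star : ∀ a : A, piq (star a) = star (piq a)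
  piq_surj : Function.Surjective piq
  piq_norm : ∀ a : A, SB.p PUnit.unit (piq a) = S.p l a
  sig_add : ∀ x y : X, sig (x + y) = sig x + sig y
  sig_csmul : ∀ (c : ℂ) (x : X), sig (c • x) = c • sig x
  sig_surj : Function.Surjective sig
  sig_smul : ∀ (x : X) (a : A), sig (M.smul x a) = N.smul (sig x) (piq a)
  sig_inner : ∀ x y : X, N.inner (sig x) (sig y) = piq (M.inner x y)
  phi_comm : ∀ (a : A) (x : X), D.phi (piq a) (sig x) = sig (C.phi a x)

/-- Katsura's C*-algebra `𝒪_{X_ω}` associated to a `𝒯`-pair `ω = ({0}, I')` of a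
C*-correspondence, presented through a representation `(π_ω, t_ω)` whose
associated `𝒯`-pair is `ω`, whose images generate the algebra, and which is
universal among representations `(π, t)` with `ω ⊆ ω_{(π,t)}` (Katsura's
Theorem 7.1). -/
structure TPairAlg {B : Type} [Ring B] [StarRing B] [Algebra ℂ B] {SB : ProCStar PUnit B}
    {Y : Type} [AddCommGroup Y] [Module ℂ Y] {N : HilbertMod SB Y} (D : Corr SB N)
    (I' : Set B)
    {O : Type} [Ring O] [StarRing O] [Algebra ℂ O] [StarModule ℂ O]
    (SO : ProCStar PUnit O) where
  rep : CorrRep D SO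
  ker_pi : ∀ b : B, rep.pi b = 0 → b = 0
  tpair_snd : ∀ b : B, b ∈ I' ↔ rep.pi b ∈ semiClosure SO.p
    ↑(Submodule.span ℂ {z : O | ∃ x y : Y, z = rep.t x * star (rep.t y)})
  generates : ∀ o : O, o ∈ semiClosure SO.p
    ↑(NonUnitalStarAlgebra.adjoin ℂ (Set.range rep.pi ∪ Set.range rep.t))
  universal : ∀ {ΛB : Type} [Preorder ΛB] {B' : Type} [Ring B'] [StarRing B'] [Algebra ℂ B']
    (SB' : ProCStar ΛB B') (R : CorrRep D SB'),
    (∀ b ∈ I', R.pi b ∈ semiClosure SB'.p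
      ↑(Submodule.span ℂ {z : B' | ∃ x y : Y, z = R.t x * star (R.t y)})) →
    ∃! Φ : O → B', IsProCStarHom SO SB' Φ ∧
      (∀ b, Φ (rep.pi b) = R.pi b) ∧ (∀ x, Φ (rep.t x) = R.t x)

/-- A Hilbert `A`–`A` pro-C*-bimodule: a right Hilbert pro-C*-module which is
also a left Hilbert pro-C*-module, with `_A⟨x,y⟩ z = x ⟨y,z⟩_A` and the
compatibility of the respective families of seminorms. -/
structure HilbertBimod {Λ : Type} [Preorder Λ] {A : Type} [Ring A] [StarRing A] [Algebra ℂ A]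
    (S : ProCStar Λ A) (X : Type) [AddCommGroup X] [Module ℂ X]
    extends HilbertMod S X where
  lsmul : A → X → X
  lsmul_add' : ∀ (a : A) (x y : X), lsmul a (x + y) = lsmul a x + lsmul a y
  add_lsmul' : ∀ (a b : A) (x : X), lsmul (a + b) x = lsmul a x + lsmul b x
  lsmul_mul' : ∀ (a b : A) (x : X), lsmul (a * b) x = lsmul a (lsmul b x)
  lsmul_csmul' : ∀ (c : ℂ) (a : A) (x : X), lsmul a (c • x) = c • lsmul a x
  csmul_lsmul' : ∀ (c : ℂ) (a : A) (x : X), lsmul (c • a) x = c • lsmul a x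
  lsmul_smul' : ∀ (a : A) (x : X) (b : A), lsmul a (smul x b) = smul (lsmul a x) b
  linner : X → X → A
  linner_add_left : ∀ x y z : X, linner (x + z) y = linner x y + linner z y
  linner_lsmul_left : ∀ (a : A) (x y : X), linner (lsmul a x) y = a * linner x y
  linner_csmul_left : ∀ (c : ℂ) (x y : X), linner (c • x) y = c • linner x y
  linner_star : ∀ x y : X, star (linner x y) = linner y x
  linner_self_pos : ∀ x : X, ∃ b : A, linner x x = star b * b
  linner_self_eq_zero : ∀ x : X, linner x x = 0 → x = 0
  bimodule_rel : ∀ x y z : X, lsmul (linner x y) z = smul x (inner y z)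
  lq : Λ → Seminorm ℂ X
  lq_sq : ∀ (l : Λ) (x : X), lq l x * lq l x = S.p l (linner x x)
  q_lsmul : ∀ (l : Λ) (a : A) (x : X), q l (lsmul a x) ≤ S.p l a * q l x
  lq_smul : ∀ (l : Λ) (x : X) (a : A), lq l (smul x a) ≤ S.p l a * lq l x

/-- The closed ideal `_AI`, the closed span of `{ _A⟨x,y⟩ : x, y ∈ X }`. -/
def leftIdealSet {Λ : Type} [Preorder Λ] {A : Type} [Ring A] [StarRing A] [Algebra ℂ A]
    {S : ProCStar Λ A} {X : Type} [AddCommGroup X] [Module ℂ X]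
    (W : HilbertBimod S X) : Set A :=
  semiClosure S.p ↑(Submodule.span ℂ {a : A | ∃ x y : X, a = W.linner x y})

/-- A covariant representation `(φ_X, φ_A)` of a Hilbert `A`–`A`
pro-C*-bimodule on a pro-C*-algebra `B` (Joiţa–Zarakas, Definition 3.1). -/
structure BimodCovRep {Λ : Type} [Preorder Λ] {A : Type} [Ring A] [StarRing A] [Algebra ℂ A]
    {S : ProCStar Λ A} {X : Type} [AddCommGroup X] [Module ℂ X] (W : HilbertBimod S X)
    {ΛB : Type} [Preorder ΛB] {B : Type} [Ring B] [StarRing B] [Algebra ℂ B]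
    (SB : ProCStar ΛB B) where
  phiA : A → B
  phiA_add : ∀ a b : A, phiA (a + b) = phiA a + phiA b
  phiA_csmul : ∀ (c : ℂ) (a : A), phiA (c • a) = c • phiA a
  phiA_mul : ∀ a b : A, phiA (a * b) = phiA a * phiA b
  phiA_star : ∀ a : A, phiA (star a) = star (phiA a)
  phiA_cont : ∀ d : ΛB, ∃ l : Λ, ∀ a : A, SB.p d (phiA a) ≤ S.p l a
  phiX : X → B
  cov_smul : ∀ (x : X) (a : A), phiX (W.smul x a) = phiX x * phiA a
  cov_lsmul : ∀ (a : A) (x : X), phiX (W.lsmul a x) = phiA a * phiX x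
  cov_inner : ∀ x y : X, star (phiX x) * phiX y = phiA (W.inner x y)
  cov_linner : ∀ x y : X, phiX x * star (phiX y) = phiA (W.linner x y)

/-- The crossed product `A ×_X ℤ` of `A` by a Hilbert `A`–`A` pro-C*-bimodule
`X` (Joiţa–Zarakas, Definition 3.3): a pro-C*-algebra with a covariant
representation `(i_X, i_A)` through which every covariant representation
factors uniquely. -/
structure CrossedProdBimod {Λ : Type} [Preorder Λ] {A : Type} [Ring A] [StarRing A] [Algebra ℂ A]
    {S : ProCStar Λ A} {X : Type} [AddCommGroup X] [Module ℂ X] (W : HilbertBimod S X)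
    {ΛO : Type} [Preorder ΛO] {O : Type} [Ring O] [StarRing O] [Algebra ℂ O]
    (SO : ProCStar ΛO O) where
  iRep : BimodCovRep W SO
  universal : ∀ {ΛB : Type} [Preorder ΛB] {B : Type} [Ring B] [StarRing B] [Algebra ℂ B]
    (SB : ProCStar ΛB B) (R : BimodCovRep W SB),
    ∃! Φ : O → B, IsProCStarHom SO SB Φ ∧
      (∀ x, Φ (iRep.phiX x) = R.phiX x) ∧ (∀ a, Φ (iRep.phiA a) = R.phiA a)

/-- A nondegenerate covariant representation `(u, φ)` of the pro-C*-dynamical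
system `(A, α, ℤ)` (with action `n ↦ αⁿ = αz n`) on a pro-C*-algebra `B`. -/
structure DynCovRep {Λ : Type} [Preorder Λ] {A : Type} [Ring A] [StarRing A] [Algebra ℂ A]
    (S : ProCStar Λ A) (αz : ℤ → A → A)
    {ΛB : Type} [Preorder ΛB] {B : Type} [Ring B] [StarRing B] [Algebra ℂ B]
    (SB : ProCStar ΛB B) where
  phi : A → B
  phi_add : ∀ a b : A, phi (a + b) = phi a + phi b
  phi_csmul : ∀ (c : ℂ) (a : A), phi (c • a) = c • phi a
  phi_mul : ∀ a b : A, phi (a * b) = phi a * phi b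
  phi_star : ∀ a : A, phi (star a) = star (phi a)
  phi_cont : ∀ d : ΛB, ∃ l : Λ, ∀ a : A, SB.p d (phi a) ≤ S.p l a
  u : ℤ → B
  u_zero : u 0 = 1
  u_add : ∀ m n : ℤ, u (m + n) = u m * u n
  u_star : ∀ n : ℤ, star (u n) = u (-n)
  cov : ∀ (n : ℤ) (a : A), u n * phi a = phi (αz n a) * u n
  nondeg : ∀ b : B, b ∈ semiClosure SB.p
    ↑(Submodule.span ℂ {z : B | ∃ (a : A) (b' : B), z = phi a * b'})

/-- The crossed product `A ×_α ℤ`: the universal pro-C*-algebra with respect to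
nondegenerate covariant representations of `(A, α, ℤ)`. -/
structure CrossedProdDyn {Λ : Type} [Preorder Λ] {A : Type} [Ring A] [StarRing A] [Algebra ℂ A]
    (S : ProCStar Λ A) (αz : ℤ → A → A)
    {ΛO : Type} [Preorder ΛO] {O : Type} [Ring O] [StarRing O] [Algebra ℂ O]
    (SO : ProCStar ΛO O) where
  iRep : DynCovRep S αz SO
  universal : ∀ {ΛB : Type} [Preorder ΛB] {B : Type} [Ring B] [StarRing B] [Algebra ℂ B]
    (SB : ProCStar ΛB B) (R : DynCovRep S αz SB),
    ∃! Φ : O → B, IsProCStarHom SO SB Φ ∧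
      (∀ a, Φ (iRep.phi a) = R.phi a) ∧ (∀ n, Φ (iRep.u n) = R.u n)

end

/-! ### Auxiliary lemmas for Statement 9 -/

section Stmt9Aux

open scoped ComplexOrder in
private lemma sqrt_eq_sqrt {a b : ℝ} (ha : 0 ≤ a) (hb : 0 ≤ b) (h : a * a = b * b) :
    a = b := by nlinarith

private lemma le_sqrt_le {a b : ℝ} (ha : 0 ≤ a) (hb : 0 ≤ b) (h : a * a ≤ b * b) :
    a ≤ b := by nlinarith

namespace Stmt9

variable {Λ : Type} [Preorder Λ] {A : Type} [Ring A] [StarRing A] [Algebra ℂ A]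
  {S : ProCStar Λ A} {X : Type} [AddCommGroup X] [Module ℂ X] {M : HilbertMod S X}

lemma q_nonneg (l : Λ) (x : X) : 0 ≤ M.q l x := apply_nonneg _ _

lemma p_nonneg (l : Λ) (a : A) : 0 ≤ S.p l a := apply_nonneg _ _

lemma inner_zero_right (x : X) : M.inner x 0 = 0 := by
  have := M.inner_csmul_right 0 x 0
  simpa using this

lemma inner_zero_left (y : X) : M.inner 0 y = 0 := by
  rw [← M.inner_star, inner_zero_right, star_zero]

lemma inner_add_left (x z y : X) : M.inner (x + z) y = M.inner x y + M.inner z y := by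
  rw [← M.inner_star, M.inner_add_right, star_add, M.inner_star, M.inner_star]

lemma inner_csmul_left (c : ℂ) (x y : X) :
    M.inner (c • x) y = star (c • M.inner y x) := by
  rw [← M.inner_star, M.inner_csmul_right]

lemma inner_neg_right (x y : X) : M.inner x (-y) = - M.inner x y := by
  have := M.inner_csmul_right (-1) x y
  simpa using this

lemma inner_neg_left (x y : X) : M.inner (-x) y = - M.inner x y := by
  rw [← M.inner_star, inner_neg_right, star_neg, M.inner_star]

lemma inner_sub_right (x y z : X) : M.inner x (y - z) = M.inner x y - M.inner x z := by
  rw [sub_eq_add_neg, M.inner_add_right, inner_neg_right, sub_eq_add_neg]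

lemma inner_sub_left (x y z : X) : M.inner (x - z) y = M.inner x y - M.inner z y := by
  rw [sub_eq_add_neg, inner_add_left, inner_neg_left, sub_eq_add_neg]

/-- `q l (x·a) ≤ q l x * p l a`. -/
lemma q_smul_le (l : Λ) (x : X) (a : A) :
    M.q l (M.smul x a) ≤ M.q l x * S.p l a := by
  obtain ⟨b, hb⟩ := M.inner_self_pos x
  have h1 : M.inner (M.smul x a) (M.smul x a) = star (b * a) * (b * a) := by
    rw [M.inner_smul_right]
    have h2 : M.inner (M.smul x a) x = star a * (star b * b) := by
      rw [← M.inner_star, M.inner_smul_right, star_mul, hb, star_mul, star_star]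
    rw [h2, star_mul]
    simp [mul_assoc]
  have h3 : M.q l (M.smul x a) * M.q l (M.smul x a) = S.p l (b * a) * S.p l (b * a) := by
    rw [M.q_sq, h1, S.p_cstar]
  have h4 : S.p l b * S.p l b = M.q l x * M.q l x := by
    rw [← S.p_cstar, ← hb, ← M.q_sq]
  have h5 : S.p l (b * a) ≤ S.p l b * S.p l a := S.p_mul l b a
  have := q_nonneg (M := M) l x
  have := q_nonneg (M := M) l (M.smul x a)
  have := p_nonneg (S := S) l a
  have := p_nonneg (S := S) l b
  have := p_nonneg (S := S) l (b * a)
  have h6 : S.p l (b * a) * S.p l (b * a) ≤ (S.p l b * S.p l a) * (S.p l b * S.p l a) :=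
    mul_le_mul h5 h5 (by positivity) (by positivity)
  have h7 : S.p l b * S.p l b * (S.p l a * S.p l a)
      = M.q l x * M.q l x * (S.p l a * S.p l a) := by rw [h4]
  refine le_sqrt_le (by positivity) (by positivity) ?_
  nlinarith

lemma q_smul_complex (l : Λ) (c : ℂ) (x : X) : M.q l (c • x) = ‖c‖ * M.q l x :=
  map_smul_eq_mul _ _ _

end Stmt9

end Stmt9Aux
namespace Stmt9

variable {Λ : Type} [Preorder Λ] {A : Type} [Ring A] [StarRing A] [Algebra ℂ A]
  {S : ProCStar Λ A} {X : Type} [AddCommGroup X] [Module ℂ X] {M : HilbertMod S X}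

lemma p_sub_le (l : Λ) (u v : A) : S.p l (u - v) ≤ S.p l u + S.p l v := by
  simpa [sub_eq_add_neg, map_neg_eq_map] using map_add_le_add (S.p l) u (-v)

lemma hermit (l : Λ) (x y : X) :
    S.p l (M.inner x y + M.inner y x) ≤
      (M.q l x + M.q l y) * (M.q l x + M.q l y) + M.q l x * M.q l x + M.q l y * M.q l y := by
  have e : M.inner x y + M.inner y x
      = M.inner (x + y) (x + y) - M.inner x x - M.inner y y := by
    rw [M.inner_add_right, inner_add_left, inner_add_left]
    abel
  have t1 : S.p l (M.inner (x + y) (x + y) - M.inner x x - M.inner y y)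
      ≤ S.p l (M.inner (x + y) (x + y)) + S.p l (M.inner x x) + S.p l (M.inner y y) := by
    calc S.p l (M.inner (x + y) (x + y) - M.inner x x - M.inner y y)
        ≤ S.p l (M.inner (x + y) (x + y) - M.inner x x) + S.p l (M.inner y y) :=
          p_sub_le l _ _
      _ ≤ S.p l (M.inner (x + y) (x + y)) + S.p l (M.inner x x) + S.p l (M.inner y y) := by
          have := p_sub_le (S := S) l (M.inner (x + y) (x + y)) (M.inner x x)
          linarith
  have s1 : S.p l (M.inner (x + y) (x + y)) = M.q l (x + y) * M.q l (x + y) :=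
    (M.q_sq l (x + y)).symm
  have s2 : M.q l (x + y) ≤ M.q l x + M.q l y := map_add_le_add _ _ _
  have s3 : S.p l (M.inner x x) = M.q l x * M.q l x := (M.q_sq l x).symm
  have s4 : S.p l (M.inner y y) = M.q l y * M.q l y := (M.q_sq l y).symm
  have hq := q_nonneg (M := M) l (x + y)
  have hx := q_nonneg (M := M) l x
  have hy := q_nonneg (M := M) l y
  rw [e]
  nlinarith [mul_le_mul s2 s2 hq (by positivity)]

lemma cs_half (l : Λ) {x : X} (y : X) (hx : M.q l x ≤ 1 / 2) :
    S.p l (M.inner x y) ≤ 2 * M.q l y := by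
  set a := M.inner x y with ha
  set w := M.smul x a with hw
  have h1 : M.inner y w = star a * a := by
    rw [hw, M.inner_smul_right, ← M.inner_star, ha]
  have h2 : M.inner w y = star a * a := by
    rw [← M.inner_star, h1, star_mul, star_star]
  have h3 : M.inner y w + M.inner w y = (2 : ℂ) • (star a * a) := by
    rw [h1, h2, two_smul]
  have h4 : S.p l (M.inner y w + M.inner w y) = 2 * (S.p l a * S.p l a) := by
    rw [h3, map_smul_eq_mul, S.p_cstar]
    norm_num
  have h5 := hermit (S := S) (M := M) l y w
  have h6 : M.q l w ≤ M.q l x * S.p l a := q_smul_le l x a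
  have hpa := p_nonneg (S := S) l a
  have hqy := q_nonneg (M := M) l y
  have hqw := q_nonneg (M := M) l w
  have hqx := q_nonneg (M := M) l x
  have h7 : M.q l w ≤ (1 / 2) * S.p l a := by
    calc M.q l w ≤ M.q l x * S.p l a := h6
    _ ≤ (1 / 2) * S.p l a := mul_le_mul_of_nonneg_right hx hpa
  nlinarith [h5, h4, sq_nonneg (S.p l a - 2 * M.q l y), sq_nonneg (S.p l a),
    mul_nonneg hqy hqw]

lemma p_inner_flip (l : Λ) (x y : X) : S.p l (M.inner x y) = S.p l (M.inner y x) := by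
  rw [← M.inner_star x y, S.p_star]

lemma p_inner_csmul_left (l : Λ) (c : ℂ) (x y : X) :
    S.p l (M.inner (c • x) y) = ‖c‖ * S.p l (M.inner x y) := by
  rw [p_inner_flip, M.inner_csmul_right, map_smul_eq_mul, p_inner_flip]

/-- Cauchy–Schwarz with constant 4. -/
lemma cs (l : Λ) (x y : X) : S.p l (M.inner x y) ≤ 4 * M.q l x * M.q l y := by
  by_cases hx : M.q l x = 0
  · rw [hx]
    have hz : ∀ c : ℝ, ‖(c : ℂ)‖ * S.p l (M.inner x y) ≤ 2 * M.q l y := by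
      intro c
      rw [← p_inner_csmul_left]
      refine cs_half l y ?_
      rw [q_smul_complex, hx]
      norm_num
    by_contra hlt
    push_neg at hlt
    have h0 : 0 < S.p l (M.inner x y) := by
      have := p_nonneg (S := S) l (M.inner x y)
      nlinarith [q_nonneg (M := M) l y]
    have hy0 : 0 ≤ M.q l y := q_nonneg (M := M) l y
    have := hz ((2 * M.q l y + 1) / S.p l (M.inner x y))
    rw [Complex.norm_real, Real.norm_eq_abs, abs_of_pos (by positivity)] at this
    rw [div_mul_cancel₀ _ (ne_of_gt h0)] at this
    linarith
  · have hqx : 0 < M.q l x := lt_of_le_of_ne (q_nonneg (M := M) l x) (Ne.symm hx)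
    set c : ℝ := (2 * M.q l x)⁻¹ with hc
    have hcpos : 0 < c := by positivity
    have h1 : M.q l ((c : ℂ) • x) = 1 / 2 := by
      rw [q_smul_complex, Complex.norm_real, Real.norm_eq_abs, abs_of_pos hcpos, hc]
      field_simp
    have h2 := cs_half (M := M) l y (le_of_eq h1)
    rw [p_inner_csmul_left, Complex.norm_real, Real.norm_eq_abs, abs_of_pos hcpos] at h2
    rw [hc] at h2
    have h3 : (2 * M.q l x)⁻¹ * S.p l (M.inner x y) ≤ 2 * M.q l y := h2
    have h4 := mul_le_mul_of_nonneg_left h3 (le_of_lt (by positivity : (0:ℝ) < 2 * M.q l x))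
    rw [← mul_assoc, mul_inv_cancel₀ (by positivity), one_mul] at h4
    nlinarith [q_nonneg (M := M) l y]

/-- `q` is monotone in the index. -/
lemma q_mono {l m : Λ} (h : m ≤ l) (x : X) : M.q m x ≤ M.q l x := by
  refine le_sqrt_le (q_nonneg m x) (q_nonneg l x) ?_
  rw [M.q_sq, M.q_sq]
  exact S.p_mono h _

end Stmt9
namespace Stmt9

variable {Λ : Type} [Preorder Λ] {A : Type} [Ring A] [StarRing A] [Algebra ℂ A]
  {S : ProCStar Λ A} {X : Type} [AddCommGroup X] [Module ℂ X] {M : HilbertMod S X}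

lemma ball_nonempty (l : Λ) : ∃ x : X, M.q l x ≤ 1 :=
  ⟨0, by rw [map_zero]; norm_num⟩

lemma opSemi_nonneg (l : Λ) (T : X → X) : 0 ≤ opSemi M l T := by
  refine Real.sSup_nonneg ?_
  rintro r ⟨x, -, rfl⟩
  exact q_nonneg l (T x)

lemma opSemi_le (l : Λ) (T : X → X) {c : ℝ} (hc : 0 ≤ c)
    (h : ∀ x : X, M.q l x ≤ 1 → M.q l (T x) ≤ c) : opSemi M l T ≤ c := by
  refine Real.sSup_le ?_ hc
  rintro r ⟨x, hx, rfl⟩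
  exact h x hx

lemma le_opSemi (l : Λ) (T : X → X)
    (hbdd : BddAbove ((fun x => M.q l (T x)) '' {x : X | M.q l x ≤ 1}))
    {x : X} (hx : M.q l x ≤ 1) : M.q l (T x) ≤ opSemi M l T :=
  le_csSup hbdd ⟨x, hx, rfl⟩

lemma opSemi_zero_fun (l : Λ) : opSemi M l (0 : X → X) = 0 := by
  have : (fun x => M.q l ((0 : X → X) x)) '' {x : X | M.q l x ≤ 1} = {0} := by
    apply Set.eq_singleton_iff_nonempty_unique_mem.2
    constructor
    · obtain ⟨x, hx⟩ := ball_nonempty (M := M) l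
      exact ⟨0, ⟨x, hx, by simp⟩⟩
    · rintro r ⟨x, -, rfl⟩
      simp
  rw [opSemi, this, csSup_singleton]

lemma opSemi_eq_zero_of_pointwise (l : Λ) (T : X → X) (h : ∀ x, M.q l (T x) = 0) :
    opSemi M l T = 0 := by
  have : (fun x => M.q l (T x)) '' {x : X | M.q l x ≤ 1} = {0} := by
    apply Set.eq_singleton_iff_nonempty_unique_mem.2
    refine ⟨?_, ?_⟩
    · obtain ⟨x, hx⟩ := ball_nonempty (M := M) l
      exact ⟨0, ⟨x, hx, (h x).symm ▸ rfl⟩⟩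
    · rintro r ⟨x, -, rfl⟩
      exact h x
  rw [opSemi, this, csSup_singleton]

/-- Adjoint relations may be flipped. -/
lemma adjoint_symm {T T' : X → X} (h : AdjointPairOn M T T') : AdjointPairOn M T' T := by
  intro x y
  have := congrArg star (h y x)
  rw [M.inner_star, M.inner_star] at this
  exact this.symm

/-- If `q l x = 0` and `T` has an adjoint then `q l (T x) = 0`. -/
lemma q_adj_zero (l : Λ) {T T' : X → X} (h : AdjointPairOn M T T')
    {x : X} (hx : M.q l x = 0) : M.q l (T x) = 0 := by
  have h1 : M.q l (T x) * M.q l (T x) = S.p l (M.inner x (T' (T x))) := by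
    rw [M.q_sq, h x (T x)]
  have h2 := cs (S := S) (M := M) l x (T' (T x))
  rw [hx] at h2
  simp only [mul_zero, zero_mul] at h2
  have := q_nonneg (M := M) l (T x)
  nlinarith [p_nonneg (S := S) l (M.inner x (T' (T x)))]

/-- Pointwise bound from the operator seminorm, given boundedness on the unit ball. -/
lemma pointwise_bound (l : Λ) {T T' : X → X} (hadj : AdjointPairOn M T T')
    (hlin : ∀ (c : ℂ) (x : X), T (c • x) = c • T x)
    (hbdd : BddAbove ((fun x => M.q l (T x)) '' {x : X | M.q l x ≤ 1}))
    (x : X) : M.q l (T x) ≤ opSemi M l T * M.q l x := by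
  by_cases hx : M.q l x = 0
  · rw [hx, mul_zero, q_adj_zero l hadj hx]
  · have hqx : 0 < M.q l x := lt_of_le_of_ne (q_nonneg l x) (Ne.symm hx)
    set c : ℝ := (M.q l x)⁻¹ with hc
    have h1 : M.q l ((c : ℂ) • x) ≤ 1 := by
      rw [q_smul_complex, Complex.norm_real, Real.norm_eq_abs, abs_of_pos (by positivity)]
      rw [hc, inv_mul_cancel₀ hx]
    have h2 := le_opSemi l T hbdd h1
    rw [hlin, q_smul_complex, Complex.norm_real, Real.norm_eq_abs,
      abs_of_pos (by positivity : (0:ℝ) < c)] at h2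
    have h3 := mul_le_mul_of_nonneg_left h2 (le_of_lt hqx)
    rw [← mul_assoc, mul_comm (M.q l x) c, hc, inv_mul_cancel₀ hx, one_mul] at h3
    rw [mul_comm]
    exact h3

end Stmt9
namespace Stmt9

section Synonyms

variable {B : Type} [Ring B] [StarRing B] [Algebra ℂ B] (SB : ProCStar PUnit B)
  {Y : Type} [AddCommGroup Y] [Module ℂ Y] (N : HilbertMod SB Y)

/-- Type synonym for `B` with the norm `p_unit`. -/
def BSp (_SB : ProCStar PUnit B) : Type := B

instance : SeminormedAddCommGroup (BSp SB) :=
  (SB.p PUnit.unit).toAddGroupSeminorm.toSeminormedAddCommGroup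

instance : NormedSpace ℂ (BSp SB) :=
  { (inferInstance : Module ℂ B) with
    norm_smul_le := fun c (y : B) => le_of_eq (map_smul_eq_mul (SB.p PUnit.unit) c y) }

lemma BSp.norm_def (b : BSp SB) : ‖b‖ = SB.p PUnit.unit b := rfl

/-- Type synonym for `Y` with the norm `q_unit`. -/
def YSp (_N : HilbertMod SB Y) : Type := Y

instance : SeminormedAddCommGroup (YSp SB N) :=
  (N.q PUnit.unit).toAddGroupSeminorm.toSeminormedAddCommGroup

instance : NormedSpace ℂ (YSp SB N) :=
  { (inferInstance : Module ℂ Y) with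
    norm_smul_le := fun c (y : Y) => le_of_eq (map_smul_eq_mul (N.q PUnit.unit) c y) }

lemma YSp.norm_def (y : YSp SB N) : ‖y‖ = N.q PUnit.unit y := rfl

instance : CompleteSpace (YSp SB N) := by
  apply Metric.complete_of_cauchySeq_tendsto
  intro u hu
  have hne : (Filter.map u Filter.atTop).NeBot := Filter.map_neBot
  have hc : ∀ (l : PUnit) (ε : ℝ), 0 < ε → ∃ s ∈ Filter.map u Filter.atTop,
      ∀ x ∈ s, ∀ y ∈ s, N.q l (x - y) < ε := by
    intro l ε hε
    rcases Metric.cauchySeq_iff.1 hu ε hε with ⟨K, hK⟩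
    refine ⟨u '' Set.Ici K, Filter.image_mem_map (Filter.Ici_mem_atTop K), ?_⟩
    rintro x ⟨i, hi, rfl⟩ y ⟨j, hj, rfl⟩
    have hd := hK i hi j hj
    rw [dist_eq_norm] at hd
    cases l
    exact hd
  obtain ⟨x₀, hx₀⟩ := N.complete _ hne hc
  refine ⟨x₀, ?_⟩
  refine Metric.tendsto_atTop.2 ?_
  intro ε hε
  obtain ⟨s, hs, h⟩ := hx₀ PUnit.unit ε hε
  replace hs := Filter.mem_atTop_sets.1 (Filter.mem_map.1 hs)
  obtain ⟨K, hK⟩ := hs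
  refine ⟨K, fun n hn => ?_⟩
  have := h (u n) (hK n hn)
  exact (dist_eq_norm _ _).trans_lt this

/-- The continuous linear map `η ↦ ⟨ξ, η⟩` on `Y`. -/
noncomputable def innerCLM (ξ : Y) : YSp SB N →L[ℂ] BSp SB :=
  LinearMap.mkContinuous
    { toFun := fun η => N.inner ξ η
      map_add' := fun a b => N.inner_add_right ξ a b
      map_smul' := fun c η => N.inner_csmul_right c ξ η }
    (4 * N.q PUnit.unit ξ)
    (fun η => by
      have := cs (S := SB) (M := N) PUnit.unit ξ η
      rw [BSp.norm_def, YSp.norm_def]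
      calc SB.p PUnit.unit (N.inner ξ η) ≤ 4 * N.q PUnit.unit ξ * N.q PUnit.unit η := this
        _ = 4 * N.q PUnit.unit ξ * N.q PUnit.unit η := rfl)

lemma innerCLM_apply (ξ : Y) (η : YSp SB N) : innerCLM SB N ξ η = N.inner ξ η := rfl

end Synonyms

section BS

variable {Λ : Type} [Preorder Λ] {A : Type} [Ring A] [StarRing A] [Algebra ℂ A]
  {S : ProCStar Λ A} {X : Type} [AddCommGroup X] [Module ℂ X] {M : HilbertMod S X}
  {C : Corr S M} {l : Λ}
  {B : Type} [Ring B] [StarRing B] [Algebra ℂ B] {SB : ProCStar PUnit B}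
  {Y : Type} [AddCommGroup Y] [Module ℂ Y] {N : HilbertMod SB Y} {D : Corr SB N}
  {piq : A → B} {sig : X → Y}

/-- `σ` is isometric. -/
lemma qN_sig (qp : QuotPres C l SB N D piq sig) (x : X) :
    N.q PUnit.unit (sig x) = M.q l x := by
  refine sqrt_eq_sqrt (q_nonneg _ _) (q_nonneg _ _) ?_
  rw [N.q_sq, M.q_sq, qp.sig_inner, qp.piq_norm]

/-- Uniform boundedness: any operator with an adjoint is bounded on the level-`l`
unit ball. -/
lemma bddAbove_adjointable (qp : QuotPres C l SB N D piq sig)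
    {T T' : X → X} (hadj : AdjointPairOn M T T') :
    BddAbove ((fun x => M.q l (T x)) '' {x : X | M.q l x ≤ 1}) := by
  classical
  have flip : ∀ (u z : X), S.p l (M.inner (T' u) z) = S.p l (M.inner (T z) u) := by
    intro u z
    rw [p_inner_flip, ← hadj z u]
  set g : {w : X // M.q l w ≤ 1} → (YSp SB N →L[ℂ] BSp SB) :=
    fun w => innerCLM SB N (sig (T' w.1)) with hg
  let sigY : X → YSp SB N := sig
  have hpt : ∀ η : YSp SB N, ∃ Cc : ℝ, ∀ w, ‖g w η‖ ≤ Cc := by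
    intro η
    obtain ⟨z, rfl⟩ := qp.sig_surj η
    refine ⟨4 * M.q l (T z), fun w => ?_⟩
    have : ‖g w (sig z)‖ = S.p l (M.inner (T' w.1) z) := by
      rw [hg]
      show SB.p PUnit.unit (N.inner (sig (T' w.1)) (sig z)) = _
      rw [qp.sig_inner, qp.piq_norm]
    rw [this, flip]
    calc S.p l (M.inner (T z) w.1) ≤ 4 * M.q l (T z) * M.q l w.1 := cs l _ _
      _ ≤ 4 * M.q l (T z) * 1 := by
          have := q_nonneg (M := M) l (T z)
          exact mul_le_mul_of_nonneg_left w.2 (by positivity)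
      _ = 4 * M.q l (T z) := mul_one _
  obtain ⟨C', hC'⟩ := banach_steinhaus hpt
  refine ⟨max C' 0, ?_⟩
  rintro r ⟨x, hx, rfl⟩
  by_cases hz : M.q l (T x) = 0
  · simp only [hz]
    exact le_max_right _ _
  · have hpos : 0 < M.q l (T x) := lt_of_le_of_ne (q_nonneg l (T x)) (Ne.symm hz)
    set c : ℝ := (M.q l (T x))⁻¹ with hc
    have hcq : M.q l ((c : ℂ) • T x) ≤ 1 := by
      rw [q_smul_complex, Complex.norm_real, Real.norm_eq_abs, abs_of_pos (by positivity)]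
      rw [hc, inv_mul_cancel₀ hz]
    set w : {w : X // M.q l w ≤ 1} := ⟨(c : ℂ) • T x, hcq⟩ with hwdef
    have h1 : ‖g w (sigY x)‖ ≤ C' * ‖sigY x‖ :=
      le_trans ((g w).le_opNorm _) (mul_le_mul_of_nonneg_right (hC' w) (norm_nonneg _))
    have h2 : ‖g w (sigY x)‖ = M.q l (T x) := by
      rw [hg]
      show SB.p PUnit.unit (N.inner (sig (T' w.1)) (sig x)) = _
      rw [qp.sig_inner, qp.piq_norm, flip]
      show S.p l (M.inner (T x) ((c : ℂ) • T x)) = _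
      rw [M.inner_csmul_right, map_smul_eq_mul, ← M.q_sq,
        Complex.norm_real, Real.norm_eq_abs, abs_of_pos (by positivity : (0:ℝ) < c), hc]
      field_simp
    have h3 : ‖sigY x‖ ≤ 1 := by
      rw [YSp.norm_def, qN_sig qp]
      exact hx
    rw [h2] at h1
    have : M.q l (T x) ≤ C' := by
      calc M.q l (T x) ≤ C' * ‖sigY x‖ := h1
        _ ≤ C' * 1 := by
            by_cases hCpos : 0 ≤ C'
            · exact mul_le_mul_of_nonneg_left h3 hCpos
            · nlinarith [norm_nonneg (sigY x), h1, hpos.le]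
        _ = C' := mul_one _
    exact this.trans (le_max_left _ _)

end BS

end Stmt9
namespace Stmt9

variable {Λ : Type} [Preorder Λ] {A : Type} [Ring A] [StarRing A] [Algebra ℂ A]
  {S : ProCStar Λ A} {X : Type} [AddCommGroup X] [Module ℂ X] {M : HilbertMod S X}

lemma theta_csmul (c : ℂ) (y x : X) :
    c • thetaOp M y x = thetaOp M (c • y) x := by
  funext z
  show c • (M.smul y (M.inner x z)) = M.smul (c • y) (M.inner x z)
  rw [M.csmul_smul']

/-- Induction principle for `thetaSpan` avoiding the scalar-multiplication case
(which is absorbed into the generators). -/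
lemma thetaSpan_induction {motive : (X → X) → Prop} {k : X → X} (hk : k ∈ thetaSpan M)
    (mem : ∀ y x : X, motive (thetaOp M y x)) (zero : motive 0)
    (add : ∀ f g : X → X, f ∈ thetaSpan M → g ∈ thetaSpan M →
      motive f → motive g → motive (f + g)) : motive k := by
  classical
  set gens : Set (X → X) := {T : X → X | ∃ y x : X, T = thetaOp M y x} with hgens
  have hclosed : ∀ (c : ℂ) (t : X → X), t ∈ AddSubmonoid.closure gens →
      c • t ∈ AddSubmonoid.closure gens := by
    intro c t ht
    induction ht using AddSubmonoid.closure_induction with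
    | mem T hT =>
        obtain ⟨y, x, rfl⟩ := hT
        rw [theta_csmul]
        exact AddSubmonoid.subset_closure ⟨c • y, x, rfl⟩
    | zero => rw [smul_zero]; exact (AddSubmonoid.closure gens).zero_mem
    | add f g hf hg ihf ihg =>
        rw [smul_add]
        exact (AddSubmonoid.closure gens).add_mem ihf ihg
  set SM : Submodule ℂ (X → X) :=
    { carrier := AddSubmonoid.closure gens
      add_mem' := fun hf hg => (AddSubmonoid.closure gens).add_mem hf hg
      zero_mem' := (AddSubmonoid.closure gens).zero_mem
      smul_mem' := fun c t ht => hclosed c t ht } with hSM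
  have h1 : k ∈ AddSubmonoid.closure gens := by
    have : thetaSpan M ≤ SM := Submodule.span_le.2 AddSubmonoid.subset_closure
    exact this hk
  have h2 : ∀ t : X → X, t ∈ AddSubmonoid.closure gens →
      motive t ∧ t ∈ thetaSpan M := by
    intro t ht
    induction ht using AddSubmonoid.closure_induction with
    | mem T hT =>
        obtain ⟨y, x, rfl⟩ := hT
        exact ⟨mem y x, Submodule.subset_span ⟨y, x, rfl⟩⟩
    | zero => exact ⟨zero, Submodule.zero_mem _⟩
    | add f g hf hg ihf ihg =>
        exact ⟨add f g ihf.2 ihg.2 ihf.1 ihg.1, Submodule.add_mem _ ihf.2 ihg.2⟩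
  exact (h2 k h1).1

/-- Elements of `thetaSpan` are additive, `ℂ`-linear and adjointable
(with adjoint in `thetaSpan`). -/
lemma thetaSpan_props {k : X → X} (hk : k ∈ thetaSpan M) :
    (∀ u v : X, k (u + v) = k u + k v) ∧ (∀ (c : ℂ) (u : X), k (c • u) = c • k u) ∧
    ∃ k' ∈ thetaSpan M, AdjointPairOn M k k' := by
  refine thetaSpan_induction (motive := fun t => (∀ u v : X, t (u + v) = t u + t v) ∧
    (∀ (c : ℂ) (u : X), t (c • u) = c • t u) ∧
    ∃ k' ∈ thetaSpan M, AdjointPairOn M t k') hk ?_ ?_ ?_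
  · intro y x
    refine ⟨?_, ?_, thetaOp M x y, Submodule.subset_span ⟨x, y, rfl⟩, ?_⟩
    · intro u v
      show M.smul y (M.inner x (u + v)) = _
      rw [M.inner_add_right, M.smul_add']
      rfl
    · intro c u
      show M.smul y (M.inner x (c • u)) = _
      rw [M.inner_csmul_right, M.smul_csmul']
      rfl
    · intro u v
      show M.inner (M.smul y (M.inner x u)) v = M.inner u (M.smul x (M.inner y v))
      rw [M.inner_smul_right u x (M.inner y v)]
      rw [← M.inner_star v (M.smul y (M.inner x u))]
      rw [M.inner_smul_right v y (M.inner x u), star_mul, M.inner_star, M.inner_star]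
  · refine ⟨by intro u v; simp, by intro c u; simp, 0, Submodule.zero_mem _, ?_⟩
    intro u v
    show M.inner 0 v = M.inner u 0
    rw [inner_zero_left, inner_zero_right]
  · intro f g hf hg ihf ihg
    obtain ⟨haddf, hsmulf, f', hf', hadf⟩ := ihf
    obtain ⟨haddg, hsmulg, g', hg', hadg⟩ := ihg
    refine ⟨?_, ?_, f' + g', Submodule.add_mem _ hf' hg', ?_⟩
    · intro u v
      show f (u + v) + g (u + v) = f u + g u + (f v + g v)
      rw [haddf, haddg]
      abel
    · intro c u
      show f (c • u) + g (c • u) = c • (f u + g u)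
      rw [hsmulf, hsmulg, smul_add]
    · intro u v
      show M.inner (f u + g u) v = M.inner u (f' v + g' v)
      rw [inner_add_left, M.inner_add_right, hadf, hadg]

end Stmt9
namespace Stmt9

variable {Λ : Type} [Preorder Λ] {A : Type} [Ring A] [StarRing A] [Algebra ℂ A]
  {S : ProCStar Λ A} {X : Type} [AddCommGroup X] [Module ℂ X] {M : HilbertMod S X}

lemma adjoint_iterate {f : X → X} (h : AdjointPairOn M f f) (n : ℕ) :
    AdjointPairOn M f^[n] f^[n] := by
  induction n with
  | zero => intro x y; simp
  | succ n ih =>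
      intro x y
      rw [Function.iterate_succ_apply, Function.iterate_succ_apply']
      rw [ih (f x) y, h x (f^[n] y)]

lemma inner_iterate {f : X → X} (h : AdjointPairOn M f f) (j : ℕ) (x : X) :
    M.inner (f^[j] x) (f^[j] x) = M.inner x (f^[j + j] x) := by
  rw [adjoint_iterate h j x (f^[j] x), ← Function.iterate_add_apply]

lemma iterate_bound (l : Λ) {f : X → X} {Cf : ℝ} (hC : 0 ≤ Cf)
    (hf : ∀ z, M.q l (f z) ≤ Cf * M.q l z) (n : ℕ) (x : X) :
    M.q l (f^[n] x) ≤ Cf ^ n * M.q l x := by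
  induction n with
  | zero => simp
  | succ n ih =>
      rw [Function.iterate_succ_apply']
      calc M.q l (f (f^[n] x)) ≤ Cf * M.q l (f^[n] x) := hf _
        _ ≤ Cf * (Cf ^ n * M.q l x) := mul_le_mul_of_nonneg_left ih hC
        _ = Cf ^ (n + 1) * M.q l x := by ring

private lemma pow2_dom {u Cv Q : ℝ} (hu : 0 ≤ u) (hC : 0 ≤ Cv)
    (h : ∀ n : ℕ, u ^ (2 ^ n) ≤ Cv ^ (2 ^ n) * Q) : u ≤ Cv := by
  by_contra hlt
  push_neg at hlt
  have hupos : 0 < u := lt_of_le_of_lt hC hlt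
  rcases eq_or_lt_of_le hC with hC0 | hCpos
  · have := h 0
    simp only [pow_one, pow_zero] at this
    rw [← hC0] at this
    simp at this
    nlinarith
  · have hgt : 1 < u / Cv := (one_lt_div hCpos).2 hlt
    have hQ : ∀ n : ℕ, (u / Cv) ^ (2 ^ n) ≤ Q := by
      intro n
      have hpow : (0:ℝ) < Cv ^ (2 ^ n) := pow_pos hCpos _
      rw [div_pow, div_le_iff₀ hpow]
      linarith [h n]
    obtain ⟨n, hn⟩ := pow_unbounded_of_one_lt Q hgt
    have h1 : (u / Cv) ^ n ≤ (u / Cv) ^ (2 ^ n) :=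
      pow_le_pow_right₀ (le_of_lt hgt) (Nat.lt_two_pow_self (n := n)).le
    have := hQ n
    linarith

section WithQP

variable {C : Corr S M} {l : Λ}
  {B : Type} [Ring B] [StarRing B] [Algebra ℂ B] {SB : ProCStar PUnit B}
  {Y : Type} [AddCommGroup Y] [Module ℂ Y] {N : HilbertMod SB Y} {D : Corr SB N}
  {piq : A → B} {sig : X → Y}

/-- Monotonicity (up to a constant) of the operator seminorms in the index,
for adjointable operators. -/
lemma opSemi_mono (qp : QuotPres C l SB N D piq sig) {m : Λ} (hml : m ≤ l)
    {T T' : X → X} (hadj : AdjointPairOn M T T')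
    (hlinT : ∀ (c : ℂ) (x : X), T (c • x) = c • T x)
    (hlinT' : ∀ (c : ℂ) (x : X), T' (c • x) = c • T' x) :
    opSemi M m T ≤ 8 * opSemi M l T := by
  have hadj' := adjoint_symm hadj
  have hbT := bddAbove_adjointable qp hadj
  have hbT' := bddAbove_adjointable qp hadj'
  set opT := opSemi M l T with hopT
  set opT' := opSemi M l T' with hopT'
  have hopTn : 0 ≤ opT := opSemi_nonneg l T
  have hopT'n : 0 ≤ opT' := opSemi_nonneg l T'
  have hptT : ∀ z, M.q l (T z) ≤ opT * M.q l z := pointwise_bound l hadj hlinT hbT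
  have hptT' : ∀ z, M.q l (T' z) ≤ opT' * M.q l z := pointwise_bound l hadj' hlinT' hbT'
  -- the composite S = T' ∘ T
  set Sc : X → X := fun z => T' (T z) with hSc
  have hadjS : AdjointPairOn M Sc Sc := by
    intro x y
    show M.inner (T' (T x)) y = M.inner x (T' (T y))
    rw [hadj' (T x) y, hadj x (T y)]
  have hCs : ∀ z, M.q l (Sc z) ≤ (opT' * opT) * M.q l z := by
    intro z
    calc M.q l (T' (T z)) ≤ opT' * M.q l (T z) := hptT' _
      _ ≤ opT' * (opT * M.q l z) := mul_le_mul_of_nonneg_left (hptT z) hopT'n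
      _ = (opT' * opT) * M.q l z := by ring
  have hT'le : opT' ≤ 4 * opT := by
    refine opSemi_le l T' (by positivity) ?_
    intro w hw
    have h1 : M.q l (T' w) * M.q l (T' w) = S.p l (M.inner (T (T' w)) w) := by
      rw [M.q_sq, ← hadj (T' w) w]
    have h2 : S.p l (M.inner (T (T' w)) w) ≤ 4 * M.q l (T (T' w)) * M.q l w := cs l _ _
    have h3 : M.q l (T (T' w)) ≤ opT * M.q l (T' w) := hptT _
    have hq := q_nonneg (M := M) l (T' w)
    have hq2 := q_nonneg (M := M) l (T (T' w))
    nlinarith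
  have hCsle : opT' * opT ≤ 4 * (opT * opT) := by nlinarith
  -- level m estimate
  refine opSemi_le m T (by positivity) ?_
  intro x hx
  have hqm := q_nonneg (M := M) m x
  set t := M.q m (T x) with ht
  have htn : 0 ≤ t := q_nonneg m (T x)
  set r : ℕ → ℝ := fun n => M.q m (Sc^[2 ^ n] x) with hr
  have hrn : ∀ n, 0 ≤ r n := fun n => q_nonneg m _
  have key1 : t * t ≤ 4 * r 0 := by
    have e1 : t * t = S.p m (M.inner x (Sc x)) := by
      rw [ht, M.q_sq, hadj x (T x)]
    have e2 : S.p m (M.inner x (Sc x)) ≤ 4 * M.q m x * M.q m (Sc x) := cs m _ _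
    have e3 : M.q m (Sc x) = r 0 := by rw [hr]; norm_num
    have := q_nonneg (M := M) m (Sc x)
    nlinarith
  have key2 : ∀ n, r n * r n ≤ 4 * r (n + 1) := by
    intro n
    have e1 : r n * r n = S.p m (M.inner x (Sc^[2 ^ n + 2 ^ n] x)) := by
      rw [hr, M.q_sq, inner_iterate hadjS]
    have e2 : Sc^[2 ^ n + 2 ^ n] x = Sc^[2 ^ (n + 1)] x := by
      congr 1
      ring
    have e3 : S.p m (M.inner x (Sc^[2 ^ (n + 1)] x)) ≤
        4 * M.q m x * M.q m (Sc^[2 ^ (n + 1)] x) := cs m _ _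
    rw [e1, e2]
    have := hrn (n + 1)
    nlinarith
  set u := t * t / 16 with hu
  have hun : 0 ≤ u := by positivity
  have hind : ∀ n, u ^ (2 ^ n) ≤ r n / 4 := by
    intro n
    induction n with
    | zero =>
        simp only [pow_zero, pow_one]
        nlinarith [key1]
    | succ n ih =>
        have e : u ^ (2 ^ (n + 1)) = (u ^ (2 ^ n)) * (u ^ (2 ^ n)) := by
          rw [← pow_add]
          congr 1
          ring
        rw [e]
        have h1 : (u ^ (2 ^ n)) * (u ^ (2 ^ n)) ≤ (r n / 4) * (r n / 4) :=
          mul_le_mul ih ih (pow_nonneg hun _) (by nlinarith [hrn n])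
        nlinarith [key2 n, h1]
  have hfin : ∀ n, u ^ (2 ^ n) ≤ (opT' * opT) ^ (2 ^ n) * M.q l x := by
    intro n
    calc u ^ (2 ^ n) ≤ r n / 4 := hind n
      _ ≤ r n := by nlinarith [hrn n]
      _ ≤ M.q l (Sc^[2 ^ n] x) := q_mono hml _
      _ ≤ (opT' * opT) ^ (2 ^ n) * M.q l x :=
          iterate_bound l (by positivity) hCs _ x
  have hule : u ≤ opT' * opT := pow2_dom hun (by positivity) hfin
  -- conclude
  have : t * t ≤ (8 * opT) * (8 * opT) := by nlinarith
  exact le_sqrt_le htn (by positivity) this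

end WithQP

end Stmt9
namespace Stmt9

variable {Λ : Type} [Preorder Λ] {A : Type} [Ring A] [StarRing A] [Algebra ℂ A]
  {S : ProCStar Λ A} {X : Type} [AddCommGroup X] [Module ℂ X] {M : HilbertMod S X}

lemma adjoint_sub {T1 T1' T2 T2' : X → X} (h1 : AdjointPairOn M T1 T1')
    (h2 : AdjointPairOn M T2 T2') : AdjointPairOn M (T1 - T2) (T1' - T2') := by
  intro x y
  show M.inner (T1 x - T2 x) y = M.inner x (T1' y - T2' y)
  rw [inner_sub_left, inner_sub_right, h1, h2]

section CorrLemmas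

variable (C : Corr S M)

lemma phi_zero : C.phi 0 = 0 := by
  have h := C.phi_add 0 0
  rw [add_zero] at h
  exact left_eq_add.1 h

lemma phi_adjoint_pair (a : A) : AdjointPairOn M (C.phi a) (C.phi (star a)) :=
  C.phi_star a

lemma inner_phi_left (a : A) (x z : X) :
    M.inner x (C.phi a z) = M.inner (C.phi (star a) x) z := by
  have h := C.phi_star (star a) x z
  rw [star_star] at h
  exact h.symm

variable {C}

lemma theta_comp {k : X → X} (hk : k ∈ thetaSpan M) (b : A) :
    (fun z => k (C.phi b z)) ∈ thetaSpan M := by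
  refine thetaSpan_induction (motive := fun t => (fun z => t (C.phi b z)) ∈ thetaSpan M)
    hk ?_ ?_ ?_
  · intro y x
    have he : (fun z => thetaOp M y x (C.phi b z))
        = thetaOp M y (C.phi (star b) x) := by
      funext z
      show M.smul y (M.inner x (C.phi b z)) = M.smul y (M.inner (C.phi (star b) x) z)
      rw [inner_phi_left]
    rw [he]
    exact Submodule.subset_span ⟨y, C.phi (star b) x, rfl⟩
  · show (fun z => (0 : X → X) (C.phi b z)) ∈ thetaSpan M
    have he : (fun z => (0 : X → X) (C.phi b z)) = (0 : X → X) := by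
      funext z; rfl
    rw [he]
    exact Submodule.zero_mem _
  · intro f g hf hg ihf ihg
    show (fun z => (f + g) (C.phi b z)) ∈ thetaSpan M
    have he : (fun z => (f + g) (C.phi b z))
        = (fun z => f (C.phi b z)) + fun z => g (C.phi b z) := by
      funext z; rfl
    rw [he]
    exact Submodule.add_mem _ ihf ihg

/-- A difference `φ_X(a) - k` with `k ∈ Θ(X)`: adjoint pair and linearity data. -/
lemma phi_sub_theta_pair (a : A) {k k' : X → X} (hk' : AdjointPairOn M k k') :
    AdjointPairOn M (C.phi a - k) (C.phi (star a) - k') :=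
  adjoint_sub (phi_adjoint_pair C a) hk'

lemma phi_sub_theta_lin (a : A) {k : X → X}
    (hklin : ∀ (c : ℂ) (u : X), k (c • u) = c • k u) (c : ℂ) (x : X) :
    (C.phi a - k) (c • x) = c • (C.phi a - k) x := by
  show C.phi a (c • x) - k (c • x) = c • (C.phi a x - k x)
  rw [(C.phi_adj a).2.1, hklin, smul_sub]

end CorrLemmas

section QPLemmas

variable {C : Corr S M} {l : Λ}
  {B : Type} [Ring B] [StarRing B] [Algebra ℂ B] {SB : ProCStar PUnit B}
  {Y : Type} [AddCommGroup Y] [Module ℂ Y] {N : HilbertMod SB Y} {D : Corr SB N}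
  {piq : A → B} {sig : X → Y}

lemma piq_zero (qp : QuotPres C l SB N D piq sig) : piq 0 = 0 := by
  have h := qp.piq_add 0 0
  rw [add_zero] at h
  exact left_eq_add.1 h

lemma sig_zero (qp : QuotPres C l SB N D piq sig) : sig 0 = 0 := by
  have h := qp.sig_add 0 0
  rw [add_zero] at h
  exact left_eq_add.1 h

lemma piq_neg (qp : QuotPres C l SB N D piq sig) (a : A) : piq (-a) = - piq a := by
  have h := qp.piq_add a (-a)
  rw [add_neg_cancel, piq_zero qp] at h
  linear_combination (norm := module) -h

lemma sig_neg (qp : QuotPres C l SB N D piq sig) (x : X) : sig (-x) = - sig x := by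
  have h := qp.sig_add x (-x)
  rw [add_neg_cancel, sig_zero qp] at h
  linear_combination (norm := module) -h

lemma piq_sub (qp : QuotPres C l SB N D piq sig) (a b : A) : piq (a - b) = piq a - piq b := by
  rw [sub_eq_add_neg, qp.piq_add, piq_neg qp, sub_eq_add_neg]

lemma sig_sub (qp : QuotPres C l SB N D piq sig) (x y : X) : sig (x - y) = sig x - sig y := by
  rw [sub_eq_add_neg, qp.sig_add, sig_neg qp, sub_eq_add_neg]

lemma sig_eq_zero_iff (qp : QuotPres C l SB N D piq sig) (x : X) : sig x = 0 ↔ M.q l x = 0 := by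
  constructor
  · intro h
    rw [← qN_sig qp, h, map_zero]
  · intro h
    have h1 : SB.p PUnit.unit (N.inner (sig x) (sig x)) = 0 := by
      rw [← N.q_sq, qN_sig qp, h, mul_zero]
    have h2 : N.inner (sig x) (sig x) = 0 := by
      refine SB.separating _ (fun u => ?_)
      cases u
      exact h1
    exact N.inner_self_eq_zero _ h2

lemma piq_eq_zero_iff (qp : QuotPres C l SB N D piq sig) (a : A) : piq a = 0 ↔ S.p l a = 0 := by
  constructor
  · intro h
    rw [← qp.piq_norm, h, map_zero]
  · intro h
    refine SB.separating _ (fun u => ?_)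
    cases u
    rw [qp.piq_norm]
    exact h

lemma opSemi_transfer (qp : QuotPres C l SB N D piq sig) {T : X → X} {T' : Y → Y} (hcomm : ∀ x, T' (sig x) = sig (T x)) :
    opSemi N PUnit.unit T' = opSemi M l T := by
  have hsets : ((fun η => N.q PUnit.unit (T' η)) '' {η : Y | N.q PUnit.unit η ≤ 1})
      = ((fun x => M.q l (T x)) '' {x : X | M.q l x ≤ 1}) := by
    ext r
    constructor
    · rintro ⟨η, hη, rfl⟩
      obtain ⟨z, rfl⟩ := qp.sig_surj η
      have hz1 : N.q PUnit.unit (sig z) ≤ 1 := hη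
      rw [qN_sig qp] at hz1
      refine ⟨z, hz1, ?_⟩
      show M.q l (T z) = N.q PUnit.unit (T' (sig z))
      rw [hcomm, qN_sig qp]
    · rintro ⟨z, hz, rfl⟩
      refine ⟨sig z, ?_, ?_⟩
      · show N.q PUnit.unit (sig z) ≤ 1
        rw [qN_sig qp]
        exact hz
      · show N.q PUnit.unit (T' (sig z)) = M.q l (T z)
        rw [hcomm, qN_sig qp]
  rw [opSemi, opSemi, hsets]

lemma span_transfer_fwd (qp : QuotPres C l SB N D piq sig) {k : X → X} (hk : k ∈ thetaSpan M) :
    ∃ k' ∈ thetaSpan N, ∀ x, k' (sig x) = sig (k x) := by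
  refine thetaSpan_induction
    (motive := fun t => ∃ k' ∈ thetaSpan N, ∀ x, k' (sig x) = sig (t x)) hk ?_ ?_ ?_
  · intro y x
    refine ⟨thetaOp N (sig y) (sig x), Submodule.subset_span ⟨sig y, sig x, rfl⟩, ?_⟩
    intro z
    show N.smul (sig y) (N.inner (sig x) (sig z)) = sig (M.smul y (M.inner x z))
    rw [qp.sig_inner, qp.sig_smul]
  · exact ⟨0, Submodule.zero_mem _, fun x => by
      show (0 : Y) = sig ((0 : X → X) x)
      rw [show (0 : X → X) x = 0 from rfl, sig_zero qp]⟩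
  · rintro f g - - ⟨f', hf', hfc⟩ ⟨g', hg', hgc⟩
    refine ⟨f' + g', Submodule.add_mem _ hf' hg', fun x => ?_⟩
    show f' (sig x) + g' (sig x) = sig (f x + g x)
    rw [hfc, hgc, ← qp.sig_add]

lemma span_transfer_bwd (qp : QuotPres C l SB N D piq sig) {k' : Y → Y} (hk' : k' ∈ thetaSpan N) :
    ∃ k ∈ thetaSpan M, ∀ x, k' (sig x) = sig (k x) := by
  refine thetaSpan_induction
    (motive := fun t => ∃ k ∈ thetaSpan M, ∀ x, t (sig x) = sig (k x)) hk' ?_ ?_ ?_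
  · intro η ξ
    obtain ⟨y, rfl⟩ := qp.sig_surj η
    obtain ⟨x, rfl⟩ := qp.sig_surj ξ
    refine ⟨thetaOp M y x, Submodule.subset_span ⟨y, x, rfl⟩, ?_⟩
    intro z
    show N.smul (sig y) (N.inner (sig x) (sig z)) = sig (M.smul y (M.inner x z))
    rw [qp.sig_inner, qp.sig_smul]
  · exact ⟨0, Submodule.zero_mem _, fun x => by
      show (0 : Y) = sig ((0 : X → X) x)
      rw [show (0 : X → X) x = 0 from rfl, sig_zero qp]⟩
  · rintro f g - - ⟨kf, hkf, hfc⟩ ⟨kg, hkg, hgc⟩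
    refine ⟨kf + kg, Submodule.add_mem _ hkf hkg, fun x => ?_⟩
    show f (sig x) + g (sig x) = sig (kf x + kg x)
    rw [hfc, hgc, ← qp.sig_add]

lemma memKlevel_transfer (qp : QuotPres C l SB N D piq sig) (a : A) :
    memKlevel M l (C.phi a) ↔ memKlevel N PUnit.unit (D.phi (piq a)) := by
  constructor
  · intro h ε hε
    obtain ⟨k, hk, hlt⟩ := h ε hε
    obtain ⟨k', hk', hcomm⟩ := span_transfer_fwd qp hk
    refine ⟨k', hk', ?_⟩
    have hc2 : ∀ x, (D.phi (piq a) - k') (sig x) = sig ((C.phi a - k) x) := by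
      intro x
      show D.phi (piq a) (sig x) - k' (sig x) = sig (C.phi a x - k x)
      rw [qp.phi_comm, hcomm, sig_sub qp]
    rw [opSemi_transfer qp hc2]
    exact hlt
  · intro h ε hε
    obtain ⟨k', hk', hlt⟩ := h ε hε
    obtain ⟨k, hk, hcomm⟩ := span_transfer_bwd qp hk'
    refine ⟨k, hk, ?_⟩
    have hc2 : ∀ x, (D.phi (piq a) - k') (sig x) = sig ((C.phi a - k) x) := by
      intro x
      show D.phi (piq a) (sig x) - k' (sig x) = sig (C.phi a x - k x)
      rw [qp.phi_comm, hcomm, sig_sub qp]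
    rw [← opSemi_transfer qp hc2]
    exact hlt

lemma phiD_eq_zero_iff (qp : QuotPres C l SB N D piq sig) (b : A) :
    D.phi (piq b) = 0 ↔ ∀ x, M.q l (C.phi b x) = 0 := by
  constructor
  · intro h x
    have h1 : sig (C.phi b x) = 0 := by
      rw [← qp.phi_comm, h]
      rfl
    exact (sig_eq_zero_iff qp _).1 h1
  · intro h
    funext η
    obtain ⟨x, rfl⟩ := qp.sig_surj η
    show D.phi (piq b) (sig x) = 0
    rw [qp.phi_comm]
    exact (sig_eq_zero_iff qp _).2 (h x)

/-- `opSemi (φ b) = 0` at level `l` iff `φ_{X_l}(π_l b) = 0`. -/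
lemma Z_iff_P (qp : QuotPres C l SB N D piq sig) (b : A) :
    opSemi M l (C.phi b) = 0 ↔ D.phi (piq b) = 0 := by
  constructor
  · intro h
    have hb := bddAbove_adjointable qp (phi_adjoint_pair C b)
    have hpt := pointwise_bound l (phi_adjoint_pair C b) ((C.phi_adj b).2.1) hb
    refine (phiD_eq_zero_iff qp b).2 (fun x => ?_)
    have := hpt x
    rw [h, zero_mul] at this
    exact le_antisymm this (q_nonneg _ _)
  · intro h
    refine opSemi_eq_zero_of_pointwise l _ (fun x => ?_)
    exact (phiD_eq_zero_iff qp b).1 h x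

lemma Xinv_iff (qp : QuotPres C l SB N D piq sig) (a : A) :
    a ∈ XinvIdeal C (kerSeminorm S l) ↔ D.phi (piq a) = 0 := by
  constructor
  · intro h
    refine (phiD_eq_zero_iff qp a).2 (fun x => ?_)
    have h1 : S.p l (M.inner (C.phi a x) (C.phi a x)) = 0 := h x (C.phi a x)
    refine le_antisymm ?_ (q_nonneg _ _)
    have h2 : M.q l (C.phi a x) * M.q l (C.phi a x) = 0 := by
      rw [M.q_sq]
      exact h1
    nlinarith [q_nonneg (M := M) l (C.phi a x)]
  · intro h x y
    have h1 : sig (C.phi a x) = 0 :=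
      (sig_eq_zero_iff qp _).2 ((phiD_eq_zero_iff qp a).1 h x)
    show S.p l (M.inner y (C.phi a x)) = 0
    rw [← qp.piq_norm, ← qp.sig_inner, h1, inner_zero_right, map_zero]

/-- The Katsura bridge: `π_l(a) ∈ J_{X_l}` iff `a ∈ J_X^l`. -/
lemma katsura_bridge (qp : QuotPres C l SB N D piq sig) (a : A) :
    piq a ∈ KatsuraIdeal D ↔ a ∈ Jlevel C l := by
  constructor
  · rintro ⟨⟨-, hKD⟩, hperp⟩
    constructor
    · exact (memKlevel_transfer qp a).2 (hKD PUnit.unit)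
    · intro b hZ
      have hP := (Z_iff_P qp b).1 hZ
      have h1 : piq a * piq b = 0 := hperp (piq b) hP
      rw [← qp.piq_mul] at h1
      exact (piq_eq_zero_iff qp _).1 h1
  · rintro ⟨hK, hperp⟩
    refine ⟨⟨D.phi_adj (piq a), fun u => ?_⟩, ?_⟩
    · cases u
      exact (memKlevel_transfer qp a).1 hK
    · intro b' hb'
      obtain ⟨b, rfl⟩ := qp.piq_surj b'
      have hZ := (Z_iff_P qp b).2 hb'
      rw [← qp.piq_mul]
      exact (piq_eq_zero_iff qp _).2 (hperp b hZ)

/-- `memKlevel` descends to smaller levels. -/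
lemma memKlevel_mono (qp : QuotPres C l SB N D piq sig) {m : Λ} (hml : m ≤ l) (a : A)
    (h : memKlevel M l (C.phi a)) : memKlevel M m (C.phi a) := by
  intro ε hε
  obtain ⟨k, hk, hlt⟩ := h (ε / 8) (by positivity)
  obtain ⟨-, hklin, k', hk', hkadj⟩ := thetaSpan_props hk
  obtain ⟨-, hk'lin, -, -, -⟩ := thetaSpan_props hk'
  refine ⟨k, hk, ?_⟩
  have hmono := opSemi_mono qp hml (phi_sub_theta_pair (C := C) a hkadj)
    (phi_sub_theta_lin (C := C) a hklin) (phi_sub_theta_lin (C := C) (star a) hk'lin)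
  calc opSemi M m (C.phi a - k) ≤ 8 * opSemi M l (C.phi a - k) := hmono
    _ < 8 * (ε / 8) := by linarith
    _ = ε := by ring

/-- `J_X^l` absorbs right multiplication in its `memKlevel` component. -/
lemma memKlevel_mul_right (qp : QuotPres C l SB N D piq sig) (a : A) (h : memKlevel M l (C.phi a)) (b : A) :
    memKlevel M l (C.phi (a * b)) := by
  intro ε hε
  set cb := opSemi M l (C.phi b) with hcb
  have hcbn : 0 ≤ cb := opSemi_nonneg l _
  obtain ⟨k, hk, hlt⟩ := h (ε / (cb + 1)) (by positivity)
  obtain ⟨-, hklin, k', hk', hkadj⟩ := thetaSpan_props hk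
  refine ⟨fun z => k (C.phi b z), theta_comp hk b, ?_⟩
  have hbddak := bddAbove_adjointable qp (phi_sub_theta_pair (C := C) a hkadj)
  have hptak := pointwise_bound l (phi_sub_theta_pair (C := C) a hkadj)
    (phi_sub_theta_lin (C := C) a hklin) hbddak
  have hbddb := bddAbove_adjointable qp (phi_adjoint_pair C b)
  have hptb := pointwise_bound l (phi_adjoint_pair C b) ((C.phi_adj b).2.1) hbddb
  have hopn : 0 ≤ opSemi M l (C.phi a - k) := opSemi_nonneg l _
  have hstep : opSemi M l (C.phi (a * b) - fun z => k (C.phi b z))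
      ≤ opSemi M l (C.phi a - k) * cb := by
    refine opSemi_le l _ (by positivity) ?_
    intro x hx
    have he : (C.phi (a * b) - fun z => k (C.phi b z)) x
        = (C.phi a - k) (C.phi b x) := by
      show C.phi (a * b) x - k (C.phi b x) = C.phi a (C.phi b x) - k (C.phi b x)
      rw [C.phi_mul]
    rw [he]
    calc M.q l ((C.phi a - k) (C.phi b x))
        ≤ opSemi M l (C.phi a - k) * M.q l (C.phi b x) := hptak _
      _ ≤ opSemi M l (C.phi a - k) * (cb * M.q l x) :=
          mul_le_mul_of_nonneg_left (hptb x) hopn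
      _ ≤ opSemi M l (C.phi a - k) * (cb * 1) := by
          have := mul_le_mul_of_nonneg_left hx hcbn
          exact mul_le_mul_of_nonneg_left (by linarith) hopn
      _ = opSemi M l (C.phi a - k) * cb := by ring
  refine lt_of_le_of_lt hstep ?_
  have h1 : opSemi M l (C.phi a - k) * cb ≤ (ε / (cb + 1)) * cb :=
    mul_le_mul_of_nonneg_right (le_of_lt hlt) hcbn
  refine lt_of_le_of_lt h1 ?_
  rw [div_mul_eq_mul_div, div_lt_iff₀ (by positivity)]
  nlinarith

end QPLemmas

section DLemmas

variable {B : Type} [Ring B] [StarRing B] [Algebra ℂ B] {SB : ProCStar PUnit B}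
  {Y : Type} [AddCommGroup Y] [Module ℂ Y] {N : HilbertMod SB Y}

lemma kerphi_star (D : Corr SB N) {β : B} (h : D.phi β = 0) : D.phi (star β) = 0 := by
  funext η
  show D.phi (star β) η = 0
  have h2 := D.phi_star β (D.phi (star β) η) η
  rw [h] at h2
  rw [show (0 : Y → Y) (D.phi (star β) η) = 0 from rfl, inner_zero_left] at h2
  exact N.inner_self_eq_zero _ h2.symm

end DLemmas

section ZeroMem

variable (C : Corr S M)

lemma Jlevel_zero (l : Λ) : (0 : A) ∈ Jlevel C l := by
  constructor
  · intro ε hε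
    refine ⟨0, Submodule.zero_mem _, ?_⟩
    rw [phi_zero C, sub_zero, opSemi_zero_fun]
    exact hε
  · intro b _
    rw [zero_mul, map_zero]

lemma Xinv_zero (m : Λ) : (0 : A) ∈ XinvIdeal C (kerSeminorm S m) := by
  intro x y
  show S.p m (M.inner y (C.phi 0 x)) = 0
  rw [phi_zero C, show (0 : X → X) x = 0 from rfl, inner_zero_right, map_zero]

variable {C}

lemma Xinv_mul_left {m : Λ} {b : A} (hb : b ∈ XinvIdeal C (kerSeminorm S m)) (a : A) :
    a * b ∈ XinvIdeal C (kerSeminorm S m) := by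
  intro x y
  show S.p m (M.inner y (C.phi (a * b) x)) = 0
  have he : M.inner y (C.phi (a * b) x) = M.inner (C.phi (star a) y) (C.phi b x) := by
    rw [C.phi_mul, inner_phi_left]
  rw [he]
  exact hb x (C.phi (star a) y)

end ZeroMem

end Stmt9

/-- For an inverse limit pro-C*-correspondence `(X, A, φ_X)`
the following are equivalent:
(1) `π_μ^A(J_X^λ) ∩ π_μ^A(X⁻¹(ker p_μ)) = {0}` for all `μ ≤ λ`;
(2) `π_{λμ}^A(J_{X_λ}) ⊆ J_{X_μ}` for all `μ ≤ λ`. -/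
theorem stmt_9 {Λ : Type} [Preorder Λ] [Nonempty Λ] [IsDirected Λ (· ≤ ·)]
    {A : Type} [Ring A] [StarRing A] [Algebra ℂ A] {S : ProCStar Λ A}
    {X : Type} [AddCommGroup X] [Module ℂ X] {M : HilbertMod S X}
    (C : Corr S M) (hC : IsInvLimCorr C)
    -- quotient presentations of the correspondences (X_λ, A_λ, φ_{X_λ})
    (B : Λ → Type) [∀ l, Ring (B l)] [∀ l, StarRing (B l)] [∀ l, Algebra ℂ (B l)]
    (SB : ∀ l, ProCStar PUnit (B l))
    (Y : Λ → Type) [∀ l, AddCommGroup (Y l)] [∀ l, Module ℂ (Y l)]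
    (N : ∀ l, HilbertMod (SB l) (Y l)) (D : ∀ l, Corr (SB l) (N l))
    (piq : ∀ l, A → B l) (sig : ∀ l, X → Y l)
    (qp : ∀ l, QuotPres C l (SB l) (N l) (D l) (piq l) (sig l))
    -- the connecting morphisms π_{λμ}^A
    (piDown : ∀ l m : Λ, m ≤ l → B l → B m)
    (hpiDown : ∀ (l m : Λ) (h : m ≤ l) (a : A), piDown l m h (piq l a) = piq m a) :
    ((∀ l m : Λ, m ≤ l →
        piq m '' Jlevel C l ∩ piq m '' XinvIdeal C (kerSeminorm S m) = {0}) ↔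
      (∀ (l m : Λ) (h : m ≤ l),
        piDown l m h '' KatsuraIdeal (D l) ⊆ KatsuraIdeal (D m))) := by
  constructor
  · -- (1) → (2)
    intro h1 l m hml
    rintro βm ⟨βl, hβl, rfl⟩
    obtain ⟨a, rfl⟩ := (qp l).piq_surj βl
    rw [hpiDown l m hml a]
    refine (Stmt9.katsura_bridge (qp m) a).2 ?_
    have haJ : a ∈ Jlevel C l := (Stmt9.katsura_bridge (qp l) a).1 hβl
    constructor
    · exact Stmt9.memKlevel_mono (qp l) hml a haJ.1
    · intro b hZ
      have hP : (D m).phi (piq m b) = 0 := (Stmt9.Z_iff_P (qp m) b).1 hZ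
      have hbX : b ∈ XinvIdeal C (kerSeminorm S m) := (Stmt9.Xinv_iff (qp m) b).2 hP
      have habJ : a * b ∈ Jlevel C l := by
        constructor
        · exact Stmt9.memKlevel_mul_right (qp l) a haJ.1 b
        · intro c hZc
          have hPc : (D l).phi (piq l c) = 0 := (Stmt9.Z_iff_P (qp l) c).1 hZc
          have hbc : (D l).phi (piq l (b * c)) = 0 := by
            rw [(qp l).piq_mul]
            funext η
            show (D l).phi (piq l b * piq l c) η = 0
            rw [(D l).phi_mul, hPc]
            show (D l).phi (piq l b) 0 = 0
            have h0 := ((D l).phi_adj (piq l b)).1 0 0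
            rw [add_zero] at h0
            exact left_eq_add.1 h0
          have hk := hβl.2 (piq l (b * c)) hbc
          rw [← (qp l).piq_mul] at hk
          have hplz := (Stmt9.piq_eq_zero_iff (qp l) _).1 hk
          show S.p l (a * b * c) = 0
          rwa [mul_assoc]
      have habX : a * b ∈ XinvIdeal C (kerSeminorm S m) := Stmt9.Xinv_mul_left hbX a
      have hmem : piq m (a * b) ∈
          piq m '' Jlevel C l ∩ piq m '' XinvIdeal C (kerSeminorm S m) :=
        ⟨⟨a * b, habJ, rfl⟩, ⟨a * b, habX, rfl⟩⟩
      rw [h1 l m hml, Set.mem_singleton_iff] at hmem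
      exact (Stmt9.piq_eq_zero_iff (qp m) _).1 hmem
  · -- (2) → (1)
    intro h2 l m hml
    refine Set.Subset.antisymm ?_ ?_
    · rintro γ ⟨⟨a, haJ, hga⟩, ⟨a', haX, hga'⟩⟩
      have hKat_l : piq l a ∈ KatsuraIdeal (D l) := (Stmt9.katsura_bridge (qp l) a).2 haJ
      have hKm : piq m a ∈ KatsuraIdeal (D m) := by
        have hmem := h2 l m hml (Set.mem_image_of_mem _ hKat_l)
        rwa [hpiDown l m hml a] at hmem
      have hphi : (D m).phi (piq m a') = 0 := (Stmt9.Xinv_iff (qp m) a').1 haX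
      have heq : piq m a = piq m a' := by rw [hga, hga']
      have hphiγ : (D m).phi (piq m a) = 0 := by rw [heq]; exact hphi
      have hstar : (D m).phi (star (piq m a)) = 0 := Stmt9.kerphi_star (D m) hphiγ
      have hzz : piq m a * star (piq m a) = 0 := hKm.2 _ hstar
      have hp0 : (SB m).p PUnit.unit (piq m a) = 0 := by
        have h3 := (SB m).p_cstar PUnit.unit (star (piq m a))
        rw [star_star, hzz, map_zero] at h3
        have h4 := (SB m).p_star PUnit.unit (piq m a)
        rw [h4] at h3
        nlinarith [Stmt9.p_nonneg (S := SB m) PUnit.unit (piq m a)]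
      have hz : piq m a = 0 := (SB m).separating _ (fun u => by cases u; exact hp0)
      rw [Set.mem_singleton_iff, ← hga]
      exact hz
    · intro γ hγ
      rw [Set.mem_singleton_iff] at hγ
      subst hγ
      exact ⟨⟨0, Stmt9.Jlevel_zero C l, Stmt9.piq_zero (qp m)⟩,
        ⟨0, Stmt9.Xinv_zero C m, Stmt9.piq_zero (qp m)⟩⟩
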